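/- Let X be a real Hilbert space, S a nonempty subset of X, u ∈ X, and let B : X → X be a map satisfying ‖B(v)‖ ≤ γ‖v‖ for all v ∈ X, where 0 ≤ γ < 1/2. Let (u^k)_{k≥0} be a sequence with u^0 ∈ X and, for each k ≥ 0, u^{k+1} a best approximation of u + B(u^k − u) in S. Then limsup_{k→∞} ‖u^k − u‖ ≤ (1/(1 − 2γ)) dist(u, S). -/

import Mathlib

open Filter

/-- Gradient-type algorithm with a contraction-like perturbation `B` (`‖B v‖ ≤ γ‖v‖`,
`γ < 1/2`) and exact best approximations in `S`: the limsup of the errors is bounded by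
`(1/(1-2γ)) dist(u, S)`. -/
theorem gradient_algorithm_limsup {X : Type*}
    [NormedAddCommGroup X] [InnerProductSpace ℝ X] [CompleteSpace X]
    (S : Set X) (hS : S.Nonempty) (u : X) (B : X → X) (γ : ℝ)
    (hγ0 : 0 ≤ γ) (hγ : γ < 1 / 2) (hB : ∀ v : X, ‖B v‖ ≤ γ * ‖v‖)
    (useq : ℕ → X)
    (hstep : ∀ k : ℕ, useq (k + 1) ∈ S ∧
      ‖u + B (useq k - u) - useq (k + 1)‖ = Metric.infDist (u + B (useq k - u)) S) :
    Filter.limsup (fun k : ℕ => ‖useq k - u‖) Filter.atTop ≤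
      (1 / (1 - 2 * γ)) * Metric.infDist u S := by
  set d : ℝ := Metric.infDist u S with hd
  have hdpos : 0 ≤ d := Metric.infDist_nonneg
  have h2γ : 1 - 2 * γ > 0 := by linarith
  set d' : ℝ := (1 / (1 - 2 * γ)) * d with hd'
  have hdd' : d + 2 * γ * d' = d' := by
    rw [hd']
    linear_combination (-d) * (mul_one_div_cancel (ne_of_gt h2γ))
  set e : ℕ → ℝ := fun k => ‖useq k - u‖ with he
  -- one-step recursion
  have hrec : ∀ k, e (k + 1) ≤ d + 2 * γ * e k := by
    intro k
    obtain ⟨_, h2⟩ := hstep k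
    have hBv := hB (useq k - u)
    have h3 : Metric.infDist (u + B (useq k - u)) S ≤ d + ‖B (useq k - u)‖ := by
      have := Metric.infDist_le_infDist_add_dist (x := u + B (useq k - u)) (y := u) (s := S)
      simpa [dist_eq_norm, add_comm, add_sub_cancel_left] using this
    have h4 : e (k + 1) ≤ ‖u + B (useq k - u) - useq (k + 1)‖ + ‖B (useq k - u)‖ := by
      have : useq (k + 1) - u = -(u + B (useq k - u) - useq (k + 1)) + B (useq k - u) := by abel
      calc e (k + 1) = ‖-(u + B (useq k - u) - useq (k + 1)) + B (useq k - u)‖ := by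
            rw [he]; simp only []; rw [this]
        _ ≤ ‖u + B (useq k - u) - useq (k + 1)‖ + ‖B (useq k - u)‖ := by
            refine (norm_add_le _ _).trans ?_; rw [norm_neg]
      
    calc e (k + 1) ≤ ‖u + B (useq k - u) - useq (k + 1)‖ + ‖B (useq k - u)‖ := h4
      _ = Metric.infDist (u + B (useq k - u)) S + ‖B (useq k - u)‖ := by rw [h2]
      _ ≤ d + ‖B (useq k - u)‖ + ‖B (useq k - u)‖ := by linarith
      _ ≤ d + 2 * γ * e k := by rw [he]; simp only []; linarith
  -- geometric bound
  have hgeo : ∀ k, e k ≤ (2 * γ) ^ k * e 0 + d' := by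
    intro k
    induction k with
    | zero => simp [hd', add_comm]; positivity
    | succ n ih =>
      calc e (n + 1) ≤ d + 2 * γ * e n := hrec n
        _ ≤ d + 2 * γ * ((2 * γ) ^ n * e 0 + d') := by nlinarith
        _ = (2 * γ) ^ (n + 1) * e 0 + (d + 2 * γ * d') := by ring
        _ = (2 * γ) ^ (n + 1) * e 0 + d' := by rw [hdd']
  set g : ℕ → ℝ := fun k => (2 * γ) ^ k * e 0 + d' with hg
  have hgt : Tendsto g atTop (nhds d') := by
    have h1 : Tendsto (fun k : ℕ => (2 * γ) ^ k) atTop (nhds 0) := by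
      apply tendsto_pow_atTop_nhds_zero_of_abs_lt_one
      rw [abs_lt]; constructor <;> linarith
    have := (h1.mul_const (e 0)).add_const d'
    simpa using this
  have hglimsup : Filter.limsup g atTop = d' := hgt.limsup_eq
  rw [← hglimsup]
  apply Filter.limsup_le_limsup
  · exact Filter.Eventually.of_forall hgeo
  · exact Filter.isCoboundedUnder_le_of_le atTop (x := 0) fun k => norm_nonneg _
  · exact hgt.isBoundedUnder_le
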